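/- Let M be a selfadjoint positive semidefinite linear operator on a finite-dimensional real inner product space Z, and define the extended dual seminorm ‖z‖*_M := sup{⟨z, z'⟩ : ‖z'‖_M ≤ 1}. Then ‖z‖*_M is finite if and only if z lies in the range of M. -/

import Mathlib

open RealInnerProductSpace

private lemma cs_aux {Z : Type*} [NormedAddCommGroup Z] [InnerProductSpace ℝ Z]
    (M : Z →ₗ[ℝ] Z)
    (hsym : ∀ u v : Z, ⟪M u, v⟫ = ⟪u, M v⟫)
    (hpsd : ∀ u : Z, 0 ≤ ⟪M u, u⟫) (u v : Z) :
    ⟪M u, v⟫ ≤ Real.sqrt ⟪M u, u⟫ * Real.sqrt ⟪M v, v⟫ := by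
  have key : ∀ t : ℝ, 0 ≤ ⟪M v, v⟫ * (t * t) + (2 * ⟪M u, v⟫) * t + ⟪M u, u⟫ := by
    intro t
    have h := hpsd (u + t • v)
    simp only [map_add, map_smul, inner_add_left, inner_add_right, real_inner_smul_left,
      real_inner_smul_right] at h
    have hc : ⟪M v, u⟫ = ⟪M u, v⟫ := by rw [hsym]; exact real_inner_comm _ _
    rw [hc] at h
    ring_nf at h ⊢
    linarith
  have hd := discrim_le_zero key
  rw [discrim] at hd
  have hx2 : ⟪M u, v⟫ ^ 2 ≤ ⟪M u, u⟫ * ⟪M v, v⟫ := by nlinarith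
  calc ⟪M u, v⟫ ≤ |⟪M u, v⟫| := le_abs_self _
    _ = Real.sqrt (⟪M u, v⟫ ^ 2) := (Real.sqrt_sq_eq_abs _).symm
    _ ≤ Real.sqrt (⟪M u, u⟫ * ⟪M v, v⟫) := Real.sqrt_le_sqrt hx2
    _ = Real.sqrt ⟪M u, u⟫ * Real.sqrt ⟪M v, v⟫ := Real.sqrt_mul (hpsd u) _

private lemma zero_aux {Z : Type*} [NormedAddCommGroup Z] [InnerProductSpace ℝ Z]
    (M : Z →ₗ[ℝ] Z)
    (hsym : ∀ u v : Z, ⟪M u, v⟫ = ⟪u, M v⟫)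
    (hpsd : ∀ u : Z, 0 ≤ ⟪M u, u⟫) (k : Z) (hk : ⟪M k, k⟫ = 0) :
    M k = 0 := by
  have h := cs_aux M hsym hpsd k (M k)
  rw [hk, Real.sqrt_zero, zero_mul] at h
  have : ⟪M k, M k⟫ = 0 := le_antisymm h (real_inner_self_nonneg)
  exact inner_self_eq_zero.mp this

theorem stmt2 {Z : Type*} [NormedAddCommGroup Z] [InnerProductSpace ℝ Z]
    [FiniteDimensional ℝ Z] (M : Z →ₗ[ℝ] Z)
    (hsym : ∀ u v : Z, ⟪M u, v⟫ = ⟪u, M v⟫)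
    (hpsd : ∀ u : Z, 0 ≤ ⟪M u, u⟫) (z : Z) :
    (⨆ (z' : Z) (_ : Real.sqrt ⟪M z', z'⟫ ≤ 1), ENNReal.ofReal ⟪z, z'⟫) ≠ ⊤ ↔
      z ∈ LinearMap.range M := by
  constructor
  · -- if z ∉ range M, the sup is ⊤
    intro hfin
    by_contra hz
    apply hfin
    -- decompose z using orthogonal projection onto the range
    set K : Submodule ℝ Z := LinearMap.range M with hK
    have hproj : (K.orthogonalProjectionOnto z : Z) ∈ K := Submodule.coe_mem _
    set k : Z := z - K.orthogonalProjectionOnto z with hkdef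
    have hkmem : k ∈ Kᗮ := Submodule.sub_starProjection_mem_orthogonal z
    have hkne : k ≠ 0 := by
      intro h0
      apply hz
      have : z = (K.orthogonalProjectionOnto z : Z) := by
        have := sub_eq_zero.mp h0
        exact this
      rw [this]; exact hproj
    -- k is in the kernel of M
    have hMk : M k = 0 := by
      apply zero_aux M hsym hpsd
      have : ⟪M k, k⟫ = ⟪k, M k⟫ := hsym k k
      exact hkmem (M k) ⟨k, rfl⟩
    have hzk : ⟪z, k⟫ = ‖k‖ ^ 2 := by
      have h1 : ⟪(K.orthogonalProjectionOnto z : Z), k⟫ = 0 := by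
        exact hkmem (K.orthogonalProjectionOnto z : Z) hproj
      have : ⟪z, k⟫ = ⟪(K.orthogonalProjectionOnto z : Z), k⟫ + ⟪k, k⟫ := by
        rw [← inner_add_left]
        congr 1
        rw [hkdef]; abel
      rw [this, h1, zero_add, real_inner_self_eq_norm_sq]
    have hknorm : (0:ℝ) < ‖k‖ ^ 2 := by
      have := norm_pos_iff.mpr hkne
      positivity
    -- now show the sup is ⊤
    rw [eq_top_iff]
    rw [← ENNReal.iSup_natCast]
    apply iSup_le
    intro n
    have hcond : Real.sqrt ⟪M ((n / ‖k‖ ^ 2 : ℝ) • k), (n / ‖k‖ ^ 2 : ℝ) • k⟫ ≤ 1 := by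
      rw [map_smul, real_inner_smul_left, real_inner_smul_right]
      have : ⟪M k, k⟫ = 0 := by rw [hMk]; simp
      rw [this]
      simp
    refine le_trans ?_ (le_iSup₂ ((n / ‖k‖ ^ 2 : ℝ) • k) hcond)
    rw [real_inner_smul_right, hzk, div_mul_cancel₀ _ (ne_of_gt hknorm)]
    simp [ENNReal.ofReal_natCast]
  · -- if z = M w, the sup is finite
    rintro ⟨w, rfl⟩
    have hbound : (⨆ (z' : Z) (_ : Real.sqrt ⟪M z', z'⟫ ≤ 1), ENNReal.ofReal ⟪M w, z'⟫)
        ≤ ENNReal.ofReal (Real.sqrt ⟪M w, w⟫) := by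
      apply iSup₂_le
      intro z' hz'
      apply ENNReal.ofReal_le_ofReal
      calc ⟪M w, z'⟫ ≤ Real.sqrt ⟪M w, w⟫ * Real.sqrt ⟪M z', z'⟫ :=
            cs_aux M hsym hpsd w z'
        _ ≤ Real.sqrt ⟪M w, w⟫ * 1 := by
            apply mul_le_mul_of_nonneg_left hz' (Real.sqrt_nonneg _)
        _ = Real.sqrt ⟪M w, w⟫ := mul_one _
    exact ne_top_of_le_ne_top ENNReal.ofReal_ne_top hbound
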